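/- Let N ≥ 2 be an integer and let f = f₀(x,y) + z^N ∈ ℂ[[x,y,z]], where f₀ ∈ ℂ[[x,y]] is Newton nondegenerate, f₀(0,0) = 0, and f₀ is convenient (supp(f₀) contains a point (a,0) on the x-axis and a point (0,b) on the y-axis). Then for every k ∈ ℤ^𝒩, the ideals 𝓘(k) and 𝓖(k) of O_X = ℂ[[x,y,z]]/(f) coincide. -/

import Mathlib

open Pointwise

noncomputable section

open scoped Classical

/-! ### Two-variable Newton polyhedra and Newton nondegeneracy -/

/-- The support of a power series in two variables. -/
def psSupp2 (f : MvPowerSeries (Fin 2) ℂ) : Set (Fin 2 →₀ ℕ) :=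
  {u | MvPowerSeries.coeff u f ≠ 0}

/-- The Newton polyhedron `Γ₊(f₀) = conv(supp f₀ + ℝ²₊)`. -/
def newtonPolyhedron2 (f : MvPowerSeries (Fin 2) ℂ) : Set (Fin 2 → ℝ) :=
  convexHull ℝ (((fun (u : Fin 2 →₀ ℕ) (i : Fin 2) => (u i : ℝ)) '' psSupp2 f) +
    {v : Fin 2 → ℝ | ∀ i, 0 ≤ v i})

/-- A compact face (of any dimension) of `P ⊆ ℝ²`: a nonempty compact exposed face. -/
def IsCompactFace2 (P F : Set (Fin 2 → ℝ)) : Prop :=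
  IsExposed ℝ P F ∧ IsCompact F ∧ F.Nonempty

/-- The value `f_F(z)` of the face polynomial `f_F` (the sum of the terms of `f` with
exponents in `F`) at a point `z ∈ (ℂ*)²`. -/
def faceEval (f : MvPowerSeries (Fin 2) ℂ) (F : Set (Fin 2 → ℝ)) (z : Fin 2 → ℂ) : ℂ :=
  ∑ᶠ u ∈ {u ∈ psSupp2 f | (fun i => ((u i : ℕ) : ℝ)) ∈ F},
    MvPowerSeries.coeff u f * ∏ i, z i ^ (u i)

/-- The value `(∂f_F/∂x_j)(z)` of the `j`-th partial derivative of the face polynomial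
`f_F` at a point `z ∈ (ℂ*)²`. -/
def facePartial (f : MvPowerSeries (Fin 2) ℂ) (F : Set (Fin 2 → ℝ)) (j : Fin 2)
    (z : Fin 2 → ℂ) : ℂ :=
  ∑ᶠ u ∈ {u ∈ psSupp2 f | (fun i => ((u i : ℕ) : ℝ)) ∈ F},
    MvPowerSeries.coeff u f * (u j : ℂ) * ∏ i, z i ^ (u i - if i = j then 1 else 0)

/-- `f₀ ∈ ℂ[[x,y]]` is Newton nondegenerate: for every compact face `F` of `Γ₊(f₀)`,
the polynomials `(f₀)_F, ∂(f₀)_F/∂x, ∂(f₀)_F/∂y` have no common zero in `(ℂ∖{0})²`. -/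
def NewtonNondeg2 (f : MvPowerSeries (Fin 2) ℂ) : Prop :=
  ∀ F, IsCompactFace2 (newtonPolyhedron2 f) F →
    ∀ z : Fin 2 → ℂ, (∀ i, z i ≠ 0) →
      ¬ (faceEval f F z = 0 ∧ ∀ j, facePartial f F j z = 0)

/-! ### Three-variable Newton polyhedra -/

/-- The support of a power series in three variables. -/
def psSupp (f : MvPowerSeries (Fin 3) ℂ) : Set (Fin 3 →₀ ℕ) :=
  {u | MvPowerSeries.coeff u f ≠ 0}

/-- The Newton polyhedron `Γ₊(f) = conv(supp f + ℝ³₊)`. -/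
def newtonPolyhedron (f : MvPowerSeries (Fin 3) ℂ) : Set (Fin 3 → ℝ) :=
  convexHull ℝ (((fun (u : Fin 3 →₀ ℕ) (i : Fin 3) => (u i : ℝ)) '' psSupp f) +
    {v : Fin 3 → ℝ | ∀ i, 0 ≤ v i})

/-- Evaluation of an integral linear functional on `ℝ³`. -/
def leval (l : Fin 3 → ℤ) (x : Fin 3 → ℝ) : ℝ := ∑ i, (l i : ℝ) * x i

/-- The value of the integral functional `l` on an exponent vector `u ∈ ℕ³`. -/
def ldot (l : Fin 3 → ℤ) (u : Fin 3 →₀ ℕ) : ℤ := ∑ i, l i * (u i : ℤ)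

/-- A primitive integral vector. -/
def Primitive (l : Fin 3 → ℤ) : Prop := ∀ d : ℤ, (∀ i, d ∣ l i) → IsUnit d

/-- The set of minimizers of the functional `l` on `P`. -/
def minSet (l : Fin 3 → ℤ) (P : Set (Fin 3 → ℝ)) : Set (Fin 3 → ℝ) :=
  {x ∈ P | ∀ y ∈ P, leval l x ≤ leval l y}

/-- A compact facet of `P`: a compact two-dimensional exposed face. -/
def IsCompactFacet (P F : Set (Fin 3 → ℝ)) : Prop :=
  IsExposed ℝ P F ∧ IsCompact F ∧ Module.finrank ℝ (vectorSpan ℝ F) = 2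

/-- The suspension `f = f₀(x,y) + z^N`. -/
def suspend (f₀ : MvPowerSeries (Fin 2) ℂ) (N : ℕ) : MvPowerSeries (Fin 3) ℂ :=
  fun d =>
    (if d 2 = 0 then
      MvPowerSeries.coeff (Finsupp.equivFunOnFinite.symm ![d 0, d 1]) f₀ else 0) +
    (if d = Finsupp.single (2 : Fin 3) N then 1 else 0)

/-! ### Auxiliary lemmas -/

section AuxLemmas

open MvPowerSeries

lemma ldot_apply (l : Fin 3 → ℤ) (u : Fin 3 →₀ ℕ) :
    ldot l u = l 0 * u 0 + l 1 * u 1 + l 2 * u 2 := by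
  simp [ldot, Fin.sum_univ_three]

lemma ldot_add (l : Fin 3 → ℤ) (p q : Fin 3 →₀ ℕ) :
    ldot l (p + q) = ldot l p + ldot l q := by
  simp only [ldot_apply, Finsupp.add_apply]
  push_cast
  ring

lemma ldot_nonneg {l : Fin 3 → ℤ} (hl : ∀ i, 0 < l i) (u : Fin 3 →₀ ℕ) :
    0 ≤ ldot l u := by
  apply Finset.sum_nonneg
  intro i _
  exact mul_nonneg (hl i).le (Int.natCast_nonneg _)

lemma coord_le_ldot {l : Fin 3 → ℤ} (hl : ∀ i, 0 < l i) (u : Fin 3 →₀ ℕ) (i₀ : Fin 3) :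
    (u i₀ : ℤ) ≤ ldot l u := by
  have h1 : (u i₀ : ℤ) ≤ l i₀ * u i₀ :=
    le_mul_of_one_le_left (Int.natCast_nonneg _) (hl i₀)
  have h2 : l i₀ * (u i₀ : ℤ) ≤ ldot l u :=
    Finset.single_le_sum (f := fun i => l i * (u i : ℤ))
      (fun i _ => mul_nonneg (hl i).le (Int.natCast_nonneg _)) (Finset.mem_univ i₀)
  linarith

lemma ldot_single (l : Fin 3 → ℤ) (N : ℕ) :
    ldot l (Finsupp.single 2 N) = l 2 * N := by
  rw [ldot_apply]
  rw [Finsupp.single_eq_same, Finsupp.single_eq_of_ne' (by decide : (2 : Fin 3) ≠ 0),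
    Finsupp.single_eq_of_ne' (by decide : (2 : Fin 3) ≠ 1)]
  simp

lemma coeff_suspend (f₀ : MvPowerSeries (Fin 2) ℂ) (N : ℕ) (d : Fin 3 →₀ ℕ) :
    MvPowerSeries.coeff d (suspend f₀ N) =
      (if d 2 = 0 then
        MvPowerSeries.coeff (Finsupp.equivFunOnFinite.symm ![d 0, d 1]) f₀ else 0) +
      (if d = Finsupp.single (2 : Fin 3) N then 1 else 0) := by
  rw [MvPowerSeries.coeff_apply]
  rfl

lemma single_two_apply_two (N : ℕ) : (Finsupp.single (2 : Fin 3) N) 2 = N :=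
  Finsupp.single_eq_same

lemma coeff_suspend_single (f₀ : MvPowerSeries (Fin 2) ℂ) {N : ℕ} (hN : N ≠ 0) :
    MvPowerSeries.coeff (Finsupp.single (2 : Fin 3) N) (suspend f₀ N) = 1 := by
  rw [coeff_suspend, if_neg, if_pos rfl, zero_add]
  rw [single_two_apply_two]
  exact hN

lemma single_mem_psSupp (f₀ : MvPowerSeries (Fin 2) ℂ) {N : ℕ} (hN : N ≠ 0) :
    Finsupp.single (2 : Fin 3) N ∈ psSupp (suspend f₀ N) := by
  show MvPowerSeries.coeff _ (suspend f₀ N) ≠ 0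
  rw [coeff_suspend_single f₀ hN]
  exact one_ne_zero

lemma psSupp_suspend {f₀ : MvPowerSeries (Fin 2) ℂ} {N : ℕ} {d : Fin 3 →₀ ℕ}
    (hd : d ∈ psSupp (suspend f₀ N)) :
    d = Finsupp.single (2 : Fin 3) N ∨
      (d 2 = 0 ∧ Finsupp.equivFunOnFinite.symm ![d 0, d 1] ∈ psSupp2 f₀) := by
  by_cases h2 : d = Finsupp.single (2 : Fin 3) N
  · exact Or.inl h2
  have hd' : MvPowerSeries.coeff d (suspend f₀ N) ≠ 0 := hd
  rw [coeff_suspend, if_neg h2, add_zero] at hd'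
  by_cases hz : d 2 = 0
  · rw [if_pos hz] at hd'
    exact Or.inr ⟨hz, hd'⟩
  · rw [if_neg hz] at hd'
    exact absurd rfl hd'

/-- The embedding of a 2-variable exponent into 3 variables. -/
def embF (u : Fin 2 →₀ ℕ) : Fin 3 →₀ ℕ :=
  Finsupp.equivFunOnFinite.symm ![u 0, u 1, 0]

lemma embF_apply (u : Fin 2 →₀ ℕ) (i : Fin 3) : embF u i = ![u 0, u 1, (0 : ℕ)] i := rfl

lemma embF_apply0 (u : Fin 2 →₀ ℕ) : embF u 0 = u 0 := rfl
lemma embF_apply1 (u : Fin 2 →₀ ℕ) : embF u 1 = u 1 := rfl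
lemma embF_apply2 (u : Fin 2 →₀ ℕ) : embF u 2 = 0 := rfl

lemma restr_embF (u : Fin 2 →₀ ℕ) :
    Finsupp.equivFunOnFinite.symm ![embF u 0, embF u 1] = u := by
  rw [Equiv.symm_apply_eq]
  funext a
  fin_cases a <;> rfl

lemma embF_mem {f₀ : MvPowerSeries (Fin 2) ℂ} {N : ℕ} (hN : N ≠ 0) {u : Fin 2 →₀ ℕ}
    (hu : u ∈ psSupp2 f₀) : embF u ∈ psSupp (suspend f₀ N) := by
  show MvPowerSeries.coeff _ (suspend f₀ N) ≠ 0
  rw [coeff_suspend]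
  have h2 : embF u 2 = 0 := rfl
  rw [if_pos h2, if_neg, add_zero, restr_embF]
  · exact hu
  · intro hcon
    have := congrArg (fun w => w 2) hcon
    simp only [embF_apply2, single_two_apply_two] at this
    exact hN this.symm

lemma ldot_embF (l : Fin 3 → ℤ) (u : Fin 2 →₀ ℕ) :
    ldot l (embF u) = l 0 * u 0 + l 1 * u 1 := by
  rw [ldot_apply, embF_apply0, embF_apply1, embF_apply2]
  simp

end AuxLemmas
section Geometry

/-- `leval` as a linear map. -/
def lmapR (l : Fin 3 → ℤ) : (Fin 3 → ℝ) →ₗ[ℝ] ℝ where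
  toFun x := leval l x
  map_add' x y := by
    simp only [leval, Pi.add_apply, mul_add]
    rw [Finset.sum_add_distrib]
  map_smul' c x := by
    simp only [leval, Pi.smul_apply, smul_eq_mul, RingHom.id_apply, Finset.mul_sum]
    exact Finset.sum_congr rfl fun i _ => by ring

lemma lmapR_apply (l : Fin 3 → ℤ) (x : Fin 3 → ℝ) : lmapR l x = leval l x := rfl

lemma leval_cast (l : Fin 3 → ℤ) (s : Fin 3 →₀ ℕ) :
    leval l (fun i => ((s i : ℕ) : ℝ)) = (ldot l s : ℝ) := by
  rw [leval, ldot]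
  push_cast
  rfl

/-- Any halfspace condition valid on the generators of the Newton polyhedron is valid
on the whole polyhedron. -/
lemma newton_halfspace (f : MvPowerSeries (Fin 3) ℂ) (φ : (Fin 3 → ℝ) →ₗ[ℝ] ℝ) (r : ℝ)
    (h1 : ∀ s ∈ psSupp f, r ≤ φ (fun i => ((s i : ℕ) : ℝ)))
    (h2 : ∀ v : Fin 3 → ℝ, (∀ i, 0 ≤ v i) → 0 ≤ φ v) :
    ∀ x ∈ newtonPolyhedron f, r ≤ φ x := by
  intro x hx
  have hsub : newtonPolyhedron f ⊆ {y | r ≤ φ y} := by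
    apply convexHull_min
    · intro y hy
      rw [Set.mem_add] at hy
      obtain ⟨a, ⟨s, hs, rfl⟩, v, hv, rfl⟩ := hy
      simp only [Set.mem_setOf_eq, map_add]
      have ha := h1 s hs
      have hb := h2 v hv
      linarith
    · exact convex_halfSpace_ge (LinearMap.isLinear φ) r
  exact hsub hx

lemma gen_mem_newton (f : MvPowerSeries (Fin 3) ℂ) {s : Fin 3 →₀ ℕ} (hs : s ∈ psSupp f) :
    (fun i => ((s i : ℕ) : ℝ)) ∈ newtonPolyhedron f := by
  apply subset_convexHull
  have h1 : (fun i => ((s i : ℕ) : ℝ)) ∈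
      (fun (u : Fin 3 →₀ ℕ) (i : Fin 3) => (u i : ℝ)) '' psSupp f := ⟨s, hs, rfl⟩
  have h2 : (0 : Fin 3 → ℝ) ∈ {v : Fin 3 → ℝ | ∀ i, 0 ≤ v i} := fun i => le_refl 0
  have := Set.add_mem_add h1 h2
  rwa [add_zero] at this

/-- Every compact facet of the Newton polyhedron of the suspension contains the point
`(0,0,N)`; consequently the weight of the facet normal on any exponent of `f₀`
is at least `N·l₂`. -/
lemma factG (N : ℕ) (hN : 2 ≤ N) (f₀ : MvPowerSeries (Fin 2) ℂ)
    {F : Set (Fin 3 → ℝ)} {l : Fin 3 → ℤ}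
    (hfacet : IsCompactFacet (newtonPolyhedron (suspend f₀ N)) F)
    (hpos : ∀ i, 0 < l i)
    (hmin : minSet l (newtonPolyhedron (suspend f₀ N)) = F)
    {u : Fin 2 →₀ ℕ} (hu : u ∈ psSupp2 f₀) :
    (N : ℤ) * l 2 ≤ l 0 * u 0 + l 1 * u 1 := by
  have hN0 : N ≠ 0 := by omega
  set P := newtonPolyhedron (suspend f₀ N) with hP
  obtain ⟨hexp, hcompact, hrank⟩ := hfacet
  -- F is nonempty
  have hFne : F.Nonempty := by
    by_contra hcon
    rw [Set.not_nonempty_iff_eq_empty] at hcon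
    rw [hcon, vectorSpan_empty] at hrank
    simp at hrank
  obtain ⟨x₀, hx₀F⟩ := hFne
  have hx₀ : x₀ ∈ minSet l P := by rw [hmin]; exact hx₀F
  obtain ⟨hx₀P, hx₀min⟩ := hx₀
  set m := leval l x₀ with hm
  -- the point (0,0,N)
  have hsNP : (fun i => ((Finsupp.single (2 : Fin 3) N i : ℕ) : ℝ)) ∈ P :=
    gen_mem_newton _ (single_mem_psSupp f₀ hN0)
  have hm_le : m ≤ (N : ℝ) * (l 2 : ℝ) := by
    have := hx₀min _ hsNP
    rw [leval_cast, ldot_single] at this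
    push_cast at this
    linarith
  -- nonnegativity of m
  have hm0 : 0 ≤ m := by
    refine newton_halfspace _ (lmapR l) 0 ?_ ?_ x₀ hx₀P
    · intro s _
      rw [lmapR_apply, leval_cast]
      exact_mod_cast ldot_nonneg hpos s
    · intro v hv
      rw [lmapR_apply, leval]
      exact Finset.sum_nonneg fun i _ =>
        mul_nonneg (by exact_mod_cast (hpos i).le) (hv i)
  by_cases hcase : m < (N : ℝ) * (l 2 : ℝ)
  · -- derive a contradiction with dim F = 2
    exfalso
    have hNpos : (0 : ℝ) < N := by exact_mod_cast Nat.pos_of_ne_zero hN0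
    set c : ℝ := ((N : ℝ) * (l 2 : ℝ) - m) / N with hc
    have hcpos : 0 < c := div_pos (by linarith) hNpos
    have hcN : c * N = (N : ℝ) * (l 2 : ℝ) - m := by
      rw [hc]; field_simp
    have hcl2 : c ≤ (l 2 : ℝ) := by
      rw [hc, div_le_iff₀ hNpos]
      linarith
    -- the halfspace m + c·x₂ ≤ leval l x contains P
    set φc : (Fin 3 → ℝ) →ₗ[ℝ] ℝ := lmapR l - c • LinearMap.proj 2 with hφc
    have hφc_apply : ∀ x, φc x = leval l x - c * x 2 := by
      intro x
      rw [hφc]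
      simp [lmapR_apply]
    have hsub : ∀ x ∈ P, m ≤ φc x := by
      refine newton_halfspace _ φc m ?_ ?_
      · intro s hs
        rw [hφc_apply, leval_cast]
        rcases psSupp_suspend hs with hsN | ⟨hs2, _⟩
        · subst hsN
          rw [ldot_single, single_two_apply_two]
          push_cast
          linarith
        · have hmem := gen_mem_newton _ hs
          have := hx₀min _ hmem
          rw [leval_cast] at this
          rw [hs2]
          push_cast
          linarith
      · intro v hv
        rw [hφc_apply, leval, Fin.sum_univ_three]
        have h0 : 0 ≤ (l 0 : ℝ) * v 0 := mul_nonneg (by exact_mod_cast (hpos 0).le) (hv 0)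
        have h1 : 0 ≤ (l 1 : ℝ) * v 1 := mul_nonneg (by exact_mod_cast (hpos 1).le) (hv 1)
        have h2 : c * v 2 ≤ (l 2 : ℝ) * v 2 := mul_le_mul_of_nonneg_right hcl2 (hv 2)
        linarith
    -- x₂ ≥ 0 on P
    have hx2nonneg : ∀ x ∈ P, (0:ℝ) ≤ x 2 := by
      refine newton_halfspace _ (LinearMap.proj 2) 0 ?_ ?_
      · intro s _; exact Nat.cast_nonneg _
      · intro v hv; exact hv 2
    -- every point of F lies on the line {x₂ = 0, l₀x₀ + l₁x₁ = m}
    have hline : ∀ x ∈ F, x 2 = 0 ∧ (l 0 : ℝ) * x 0 + (l 1 : ℝ) * x 1 = m := by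
      intro x hxF
      have hx : x ∈ minSet l P := by rw [hmin]; exact hxF
      obtain ⟨hxP, hxmin⟩ := hx
      have hxm : leval l x = m := le_antisymm (hxmin x₀ hx₀P) (hx₀min x hxP)
      have h1 := hsub x hxP
      rw [hφc_apply, hxm] at h1
      have h2 := hx2nonneg x hxP
      have hx2 : x 2 = 0 := by nlinarith
      refine ⟨hx2, ?_⟩
      rw [leval, Fin.sum_univ_three, hx2] at hxm
      linarith
    -- F spans at most a line
    set dvec : Fin 3 → ℝ := ![(l 1 : ℝ), -(l 0 : ℝ), 0] with hdvec
    have hl1ne : (l 1 : ℝ) ≠ 0 := by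
      have := (hpos 1).ne'
      exact_mod_cast this
    have hdvec0 : dvec ≠ 0 := by
      intro hcon
      have h0 : dvec 0 = 0 := by rw [hcon]; rfl
      rw [hdvec] at h0
      simp only [Matrix.cons_val_zero] at h0
      exact hl1ne h0
    have hspan : vectorSpan ℝ F ≤ Submodule.span ℝ {dvec} := by
      rw [vectorSpan_def, Submodule.span_le]
      intro v hv
      rw [Set.mem_vsub] at hv
      obtain ⟨x, hx, y, hy, rfl⟩ := hv
      obtain ⟨hx2, hxl⟩ := hline x hx
      obtain ⟨hy2, hyl⟩ := hline y hy
      rw [SetLike.mem_coe, Submodule.mem_span_singleton]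
      refine ⟨(x 0 - y 0) / (l 1 : ℝ), ?_⟩
      have hvs : (x -ᵥ y) = x - y := rfl
      rw [hvs]
      funext i
      rw [Pi.smul_apply, smul_eq_mul, Pi.sub_apply]
      fin_cases i
      · show (x 0 - y 0) / (l 1 : ℝ) * dvec 0 = x 0 - y 0
        rw [hdvec]
        rw [show (![(l 1 : ℝ), -(l 0 : ℝ), 0]) 0 = (l 1 : ℝ) from rfl]
        exact div_mul_cancel₀ _ hl1ne
      · show (x 0 - y 0) / (l 1 : ℝ) * dvec 1 = x 1 - y 1
        rw [hdvec]
        rw [show (![(l 1 : ℝ), -(l 0 : ℝ), 0]) 1 = -(l 0 : ℝ) from rfl]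
        rw [div_mul_eq_mul_div, div_eq_iff hl1ne]
        linear_combination hyl - hxl
      · show (x 0 - y 0) / (l 1 : ℝ) * dvec 2 = x 2 - y 2
        rw [hdvec]
        rw [show (![(l 1 : ℝ), -(l 0 : ℝ), 0]) 2 = (0:ℝ) from rfl]
        rw [hx2, hy2]
        ring
    have hle1 : Module.finrank ℝ (vectorSpan ℝ F) ≤
        Module.finrank ℝ (Submodule.span ℝ {dvec}) := Submodule.finrank_mono hspan
    rw [finrank_span_singleton hdvec0] at hle1
    omega
  · -- N l₂ ≤ m : conclude directly
    push_neg at hcase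
    have hmem := gen_mem_newton _ (embF_mem hN0 hu)
    have := hx₀min _ hmem
    rw [leval_cast, ldot_embF] at this
    have : (N : ℝ) * (l 2 : ℝ) ≤ ((l 0 * u 0 + l 1 * u 1 : ℤ) : ℝ) := by
      push_cast
      push_cast at this
      linarith
    exact_mod_cast this

end Geometry
section Steps

set_option maxHeartbeats 1000000
set_option synthInstance.maxHeartbeats 400000

/-- Step 1: any lift can be corrected so that all monomials in the finite "bad" set `B`
have `z`-degree `< N`. -/
lemma step1 (f₀ : MvPowerSeries (Fin 2) ℂ) (N : ℕ) (hN : 1 ≤ N)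
    (hsuppf : ∀ q ∈ psSupp (suspend f₀ N), q = Finsupp.single (2 : Fin 3) N ∨ q 2 = 0)
    (hcoeffN : MvPowerSeries.coeff (Finsupp.single (2 : Fin 3) N) (suspend f₀ N) = 1)
    (g : MvPowerSeries (Fin 3) ℂ ⧸ Ideal.span {suspend f₀ N})
    (B : Set (Fin 3 →₀ ℕ)) (hBfin : B.Finite) (j : ℕ) :
    ∀ h : MvPowerSeries (Fin 3) ℂ,
      Ideal.Quotient.mk (Ideal.span {suspend f₀ N}) h = g →
      (∀ u ∈ psSupp h, u ∈ B → u 2 < N + j) →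
      ∃ h', Ideal.Quotient.mk (Ideal.span {suspend f₀ N}) h' = g ∧
        ∀ u ∈ psSupp h', u ∈ B → u 2 < N := by
  induction j with
  | zero => exact fun h hh hb => ⟨h, hh, by simpa using hb⟩
  | succ j ih =>
    intro h hh hb
    set f := suspend f₀ N with hfdef
    set d := N + j with hd
    have hCfin : Set.Finite {u | u ∈ psSupp h ∧ u ∈ B ∧ u 2 = d} :=
      hBfin.subset fun u hu => hu.2.1
    set C := hCfin.toFinset with hCdef
    have hmemC : ∀ u, u ∈ C ↔ (u ∈ psSupp h ∧ u ∈ B ∧ u 2 = d) := by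
      intro u; rw [hCdef, Set.Finite.mem_toFinset]; rfl
    set cs : MvPowerSeries (Fin 3) ℂ :=
      ∑ u ∈ C, MvPowerSeries.monomial (u - Finsupp.single (2 : Fin 3) N)
        (MvPowerSeries.coeff u h) with hcs
    have hle : ∀ u ∈ C, Finsupp.single (2 : Fin 3) N ≤ u := by
      intro u hu
      rw [Finsupp.single_le_iff]
      have := ((hmemC u).1 hu).2.2
      omega
    have key : ∀ v, MvPowerSeries.coeff v (cs * f) =
        ∑ u ∈ C, (if u - Finsupp.single (2 : Fin 3) N ≤ v then
          MvPowerSeries.coeff u h *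
            MvPowerSeries.coeff (v - (u - Finsupp.single (2 : Fin 3) N)) f else 0) := by
      intro v
      rw [hcs, Finset.sum_mul, map_sum]
      exact Finset.sum_congr rfl fun u _ => by rw [MvPowerSeries.coeff_monomial_mul]
    have hCoeffC : ∀ u ∈ C, MvPowerSeries.coeff u (cs * f) = MvPowerSeries.coeff u h := by
      intro u huC
      rw [key]
      rw [Finset.sum_eq_single u ?h0 ?h1]
      · rw [if_pos tsub_le_self, tsub_tsub_cancel_of_le (hle u huC), hcoeffN, mul_one]
      case h1 => intro hu; exact absurd huC hu
      case h0 =>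
        intro u' hu' hne
        split_ifs with hle'
        · have h2u : u 2 = d := ((hmemC u).1 huC).2.2
          have h2u' : u' 2 = d := ((hmemC u').1 hu').2.2
          have hq2 : (u - (u' - Finsupp.single (2 : Fin 3) N)) 2 = N := by
            rw [Finsupp.tsub_apply, Finsupp.tsub_apply, single_two_apply_two, h2u, h2u']
            omega
          by_contra hne0
          have hne0' : MvPowerSeries.coeff (u - (u' - Finsupp.single (2 : Fin 3) N)) f ≠ 0 :=
            fun h0 => hne0 (by rw [h0, mul_zero])
          rcases hsuppf _ hne0' with hq | hq
          · apply hne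
            have h1 : u = Finsupp.single (2 : Fin 3) N + (u' - Finsupp.single (2 : Fin 3) N) :=
              (tsub_eq_iff_eq_add_of_le hle').mp hq
            rw [add_comm, tsub_add_cancel_of_le (hle u' hu')] at h1
            exact h1.symm
          · rw [hq2] at hq; omega
        · rfl
    refine ih (h - cs * f) ?_ ?_
    · rw [map_sub, hh]
      have hz : Ideal.Quotient.mk (Ideal.span {f}) (cs * f) = 0 := by
        rw [Ideal.Quotient.eq_zero_iff_mem]
        exact Ideal.mul_mem_left _ _ (Ideal.subset_span (Set.mem_singleton _))
      rw [hz, sub_zero]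
    · intro v hv hvB
      have hv' : MvPowerSeries.coeff v (h - cs * f) ≠ 0 := hv
      rw [map_sub] at hv'
      have hvnotC : v ∉ C := by
        intro hvC
        rw [hCoeffC v hvC, sub_self] at hv'
        exact hv' rfl
      by_cases hcsv : MvPowerSeries.coeff v (cs * f) = 0
      · have hhv : MvPowerSeries.coeff v h ≠ 0 := by
          intro h0; rw [h0, hcsv, sub_zero] at hv'; exact hv' rfl
        have hlt := hb v hhv hvB
        have hne : v 2 ≠ d := fun h2 => hvnotC ((hmemC v).2 ⟨hhv, hvB, h2⟩)
        omega
      · rw [key] at hcsv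
        obtain ⟨u, huC, hterm⟩ := Finset.exists_ne_zero_of_sum_ne_zero hcsv
        split_ifs at hterm with hle'
        · have hqne : MvPowerSeries.coeff (v - (u - Finsupp.single (2 : Fin 3) N)) f ≠ 0 :=
            right_ne_zero_of_mul hterm
          rcases hsuppf _ hqne with hq | hq
          · exfalso
            apply hvnotC
            have h1 : v = Finsupp.single (2 : Fin 3) N + (u - Finsupp.single (2 : Fin 3) N) :=
              (tsub_eq_iff_eq_add_of_le hle').mp hq
            rw [add_comm, tsub_add_cancel_of_le (hle u huC)] at h1
            rw [h1]
            exact huC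
          · have hvsum : (u - Finsupp.single (2 : Fin 3) N) + (v - (u - Finsupp.single (2 : Fin 3) N)) = v :=
              add_tsub_cancel_of_le hle'
            have h2 := congrArg (fun w : Fin 3 →₀ ℕ => w 2) hvsum
            simp only [Finsupp.add_apply] at h2
            rw [hq] at h2
            rw [Finsupp.tsub_apply, single_two_apply_two] at h2
            have h2u : u 2 = d := ((hmemC u).1 huC).2.2
            rw [h2u] at h2
            omega
        · exact absurd rfl hterm

/-- Step 2: a lift whose low-weight monomials all have `z`-degree `< N` has weight at
least that of any other lift. -/
lemma step2 (f₀ : MvPowerSeries (Fin 2) ℂ) (N : ℕ) (hN : 1 ≤ N)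
    (l : Fin 3 → ℤ) (hl : ∀ i, 0 < l i) (kn : ℤ)
    (hsuppf : ∀ q ∈ psSupp (suspend f₀ N), q = Finsupp.single (2 : Fin 3) N ∨ q 2 = 0)
    (hcoeffN : MvPowerSeries.coeff (Finsupp.single (2 : Fin 3) N) (suspend f₀ N) = 1)
    (hfc : ∀ q ∈ psSupp (suspend f₀ N), (N : ℤ) * l 2 ≤ ldot l q)
    (h hn : MvPowerSeries (Fin 3) ℂ)
    (heq : Ideal.Quotient.mk (Ideal.span {suspend f₀ N}) h =
      Ideal.Quotient.mk (Ideal.span {suspend f₀ N}) hn)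
    (hinv : ∀ u ∈ psSupp h, ldot l u < kn → u 2 < N)
    (hgood : ∀ u ∈ psSupp hn, kn ≤ ldot l u) :
    ∀ u ∈ psSupp h, kn ≤ ldot l u := by
  intro u₀ hu₀
  by_contra hlt
  push_neg at hlt
  set f := suspend f₀ N with hfdef
  have hdvd : f ∣ (h - hn) := by
    rw [← Ideal.mem_span_singleton]
    exact Ideal.Quotient.eq.mp heq
  obtain ⟨a, ha⟩ := hdvd
  by_cases ha0 : a = 0
  · rw [ha0, mul_zero, sub_eq_zero] at ha
    have : u₀ ∈ psSupp hn := by rw [← ha]; exact hu₀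
    exact absurd (hgood u₀ this) (not_le.mpr hlt)
  have hane : ∃ p, MvPowerSeries.coeff p a ≠ 0 := by
    by_contra hno; push_neg at hno
    exact ha0 (MvPowerSeries.ext fun p => by rw [hno p, map_zero])
  obtain ⟨w, hwP, hwleast⟩ :=
    Int.exists_least_of_bdd (P := fun m => ∃ p, MvPowerSeries.coeff p a ≠ 0 ∧ ldot l p = m)
      ⟨0, fun z hz => by obtain ⟨p, _, hp⟩ := hz; rw [← hp]; exact ldot_nonneg hl p⟩
      (by obtain ⟨p, hp⟩ := hane; exact ⟨ldot l p, p, hp, rfl⟩)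
  obtain ⟨u₁, hu₁, hu₁w⟩ := hwP
  have hw0 : 0 ≤ w := by rw [← hu₁w]; exact ldot_nonneg hl u₁
  set T : Set ℕ := {m | ∃ p, MvPowerSeries.coeff p a ≠ 0 ∧ ldot l p = w ∧ p 2 = m} with hT
  have hTne : T.Nonempty := ⟨u₁ 2, u₁, hu₁, hu₁w, rfl⟩
  have hTbdd : BddAbove T := by
    refine ⟨w.toNat, fun m hm => ?_⟩
    obtain ⟨p, hp, hpw, hp2⟩ := hm
    have := coord_le_ldot hl p 2
    rw [hpw, hp2] at this
    omega
  obtain ⟨ps, hps, hpsw, hps2⟩ := Nat.sSup_mem hTne hTbdd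
  have hmax : ∀ p, MvPowerSeries.coeff p a ≠ 0 → ldot l p = w → p 2 ≤ ps 2 := by
    intro p hp hpw
    rw [hps2]
    exact le_csSup hTbdd ⟨p, hp, hpw, rfl⟩
  set v : Fin 3 →₀ ℕ := ps + Finsupp.single (2 : Fin 3) N with hvdef
  have hv2 : v 2 = ps 2 + N := by
    rw [hvdef, Finsupp.add_apply, single_two_apply_two]
  have hldotv : ldot l v = w + l 2 * N := by
    rw [hvdef, ldot_add, hpsw, ldot_single]
  have hcv : MvPowerSeries.coeff v (f * a) = MvPowerSeries.coeff ps a := by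
    rw [MvPowerSeries.coeff_mul]
    rw [Finset.sum_eq_single (Finsupp.single (2 : Fin 3) N, ps) ?h0 ?h1]
    · rw [hcoeffN, one_mul]
    case h1 =>
      intro hnm
      exact absurd (Finset.HasAntidiagonal.mem_antidiagonal.mpr (add_comm _ _)) hnm
    case h0 =>
      rintro ⟨p, q⟩ hpq hne
      rw [Finset.HasAntidiagonal.mem_antidiagonal] at hpq
      by_contra h0
      have hpne : MvPowerSeries.coeff p f ≠ 0 := left_ne_zero_of_mul h0
      have hqne : MvPowerSeries.coeff q a ≠ 0 := right_ne_zero_of_mul h0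
      have h1 : (N : ℤ) * l 2 ≤ ldot l p := hfc p hpne
      have h2 : w ≤ ldot l q := hwleast _ ⟨q, hqne, rfl⟩
      have h3 : ldot l p + ldot l q = w + l 2 * N := by
        rw [← ldot_add, hpq, hldotv]
      have hcomm : (N : ℤ) * l 2 = l 2 * N := mul_comm _ _
      rcases hsuppf p hpne with hpN | hp2
      · apply hne
        have h4 : p + q = ps + Finsupp.single (2 : Fin 3) N := by rw [hpq, hvdef]
        rw [hpN, add_comm ps] at h4
        have : q = ps := add_left_cancel h4
        rw [hpN, this]
      · have hqw : ldot l q = w := by linarith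
        have hq2 : q 2 = ps 2 + N := by
          have := congrArg (fun t : Fin 3 →₀ ℕ => t 2) hpq
          simp only [Finsupp.add_apply] at this
          rw [hp2, hv2] at this
          omega
        have := hmax q hqne hqw
        omega
  have hvne : MvPowerSeries.coeff v (h - hn) ≠ 0 := by
    rw [ha, hcv]; exact hps
  have hcase : MvPowerSeries.coeff v h ≠ 0 ∨ MvPowerSeries.coeff v hn ≠ 0 := by
    by_contra hc; push_neg at hc
    rw [map_sub, hc.1, hc.2, sub_self] at hvne
    exact hvne rfl
  have hkv : kn ≤ w + l 2 * N := by
    rw [← hldotv]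
    rcases hcase with hcase | hcase
    · by_contra hlt2; push_neg at hlt2
      have := hinv v hcase hlt2
      omega
    · exact hgood v hcase
  have hcfa : MvPowerSeries.coeff u₀ (f * a) = 0 := by
    rw [MvPowerSeries.coeff_mul]
    apply Finset.sum_eq_zero
    rintro ⟨p, q⟩ hpq
    rw [Finset.HasAntidiagonal.mem_antidiagonal] at hpq
    by_contra h0
    have hpne : MvPowerSeries.coeff p f ≠ 0 := left_ne_zero_of_mul h0
    have hqne : MvPowerSeries.coeff q a ≠ 0 := right_ne_zero_of_mul h0
    have h1 : (N : ℤ) * l 2 ≤ ldot l p := hfc p hpne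
    have h2 : w ≤ ldot l q := hwleast _ ⟨q, hqne, rfl⟩
    have h3 : ldot l p + ldot l q = ldot l u₀ := by rw [← ldot_add, hpq]
    have hcomm : (N : ℤ) * l 2 = l 2 * N := mul_comm _ _
    linarith
  have heq0 : MvPowerSeries.coeff u₀ h = MvPowerSeries.coeff u₀ hn := by
    have := congrArg (MvPowerSeries.coeff u₀) ha
    rw [map_sub, hcfa] at this
    exact sub_eq_zero.mp this
  have : u₀ ∈ psSupp hn := by
    show MvPowerSeries.coeff u₀ hn ≠ 0
    rw [← heq0]; exact hu₀
  exact absurd (hgood u₀ this) (not_le.mpr hlt)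

end Steps

set_option maxHeartbeats 1000000 in
set_option synthInstance.maxHeartbeats 400000 in
/-- Let `N ≥ 2` and `f = f₀(x,y) + z^N` where `f₀ ∈ ℂ[[x,y]]` is Newton
nondegenerate, `f₀(0,0) = 0`, and `f₀` is convenient.  Then for every `k ∈ ℤ^𝒩` the
ideals `𝓘(k)` and `𝓖(k)` of `O_X = ℂ[[x,y,z]]/(f)` coincide.  Here `𝒩` is formalized as
a finite type `NN` enumerating the compact facets of `Γ₊(f)` with primitive inward
normals `ll n`; for `g ∈ O_X`, membership `g ∈ 𝓘(k)` is expressed by the existence of a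
single lift `h` of `g` with `ŵt_n(h) ≥ k n` for all `n` (where `ŵt_n(h) ≥ k` iff every
`u ∈ supp h` has `ℓ_n·u ≥ k`, which also covers `ŵt_n(0) = +∞`), while `g ∈ 𝓖(k)`
(i.e. `wt_n(g) = sup {ŵt_n(h) : h ↦ g} ≥ k n` for all `n`) is expressed by the existence,
for each `n` separately, of a lift `h` of `g` with `ŵt_n(h) ≥ k n`. -/
theorem suspension_image_eq_order_filtration
    (N : ℕ) (hN : 2 ≤ N)
    (f₀ : MvPowerSeries (Fin 2) ℂ) (hf₀ : f₀ ≠ 0)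
    (hconst : MvPowerSeries.coeff 0 f₀ = 0)
    (hnd : NewtonNondeg2 f₀)
    (hconvX : ∃ a : ℕ, Finsupp.single (0 : Fin 2) a ∈ psSupp2 f₀)
    (hconvY : ∃ b : ℕ, Finsupp.single (1 : Fin 2) b ∈ psSupp2 f₀)
    (NN : Type) [Fintype NN]
    (FF : NN → Set (Fin 3 → ℝ)) (ll : NN → Fin 3 → ℤ)
    (hfacet : ∀ n, IsCompactFacet (newtonPolyhedron (suspend f₀ N)) (FF n))
    (hinj : Function.Injective FF)
    (hsurj : ∀ G, IsCompactFacet (newtonPolyhedron (suspend f₀ N)) G → ∃ n, FF n = G)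
    (hprim : ∀ n, Primitive (ll n))
    (hpos : ∀ n i, 0 < ll n i)
    (hmin : ∀ n, minSet (ll n) (newtonPolyhedron (suspend f₀ N)) = FF n)
    (k : NN → ℤ) :
    ∀ g : MvPowerSeries (Fin 3) ℂ ⧸ Ideal.span {suspend f₀ N},
      (∃ h : MvPowerSeries (Fin 3) ℂ,
          Ideal.Quotient.mk (Ideal.span {suspend f₀ N}) h = g ∧
          ∀ n, ∀ u ∈ psSupp h, k n ≤ ldot (ll n) u) ↔
      (∀ n, ∃ h : MvPowerSeries (Fin 3) ℂ,
          Ideal.Quotient.mk (Ideal.span {suspend f₀ N}) h = g ∧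
          ∀ u ∈ psSupp h, k n ≤ ldot (ll n) u) := by
  intro g
  constructor
  · rintro ⟨h, hh, hw⟩ n
    exact ⟨h, hh, hw n⟩
  · intro hyp
    have hN0 : N ≠ 0 := by omega
    have hN1 : 1 ≤ N := by omega
    have hsuppf : ∀ q ∈ psSupp (suspend f₀ N),
        q = Finsupp.single (2 : Fin 3) N ∨ q 2 = 0 := by
      intro q hq
      rcases psSupp_suspend hq with h1 | h2
      · exact Or.inl h1
      · exact Or.inr h2.1
    have hcoeffN := coeff_suspend_single f₀ hN0
    have hfc : ∀ n, ∀ q ∈ psSupp (suspend f₀ N), (N : ℤ) * ll n 2 ≤ ldot (ll n) q := by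
      intro n q hq
      rcases psSupp_suspend hq with h1 | ⟨h2, h3⟩
      · rw [h1, ldot_single]
        exact le_of_eq (mul_comm _ _)
      · have hemb : embF (Finsupp.equivFunOnFinite.symm ![q 0, q 1]) = q := by
          apply Finsupp.ext
          intro i
          fin_cases i
          · rfl
          · rfl
          · exact h2.symm
        rw [← hemb, ldot_embF]
        exact factG N hN f₀ (hfacet n) (hpos n) (hmin n) h3
    set B : Set (Fin 3 →₀ ℕ) := {u | ∃ n, ldot (ll n) u < k n} with hBdef
    have hBfin : B.Finite := by
      have hsub : B ⊆ ⋃ n : NN, {u : Fin 3 →₀ ℕ | ldot (ll n) u < k n} := by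
        rintro u ⟨n, hn⟩
        exact Set.mem_iUnion.mpr ⟨n, hn⟩
      refine Set.Finite.subset (Set.finite_iUnion ?_) hsub
      intro n
      have hsub2 : {u : Fin 3 →₀ ℕ | ldot (ll n) u < k n} ⊆
          Set.Icc 0 (Finsupp.equivFunOnFinite.symm fun _ => (k n).toNat) := by
        intro u hu
        refine ⟨(zero_le : 0 ≤ u), ?_⟩
        rw [Finsupp.le_def]
        intro i
        have h1 := coord_le_ldot (hpos n) u i
        have h2 : ldot (ll n) u < k n := hu
        show u i ≤ (k n).toNat
        omega
      exact (Set.finite_Icc _ _).subset hsub2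
    set Z : ℕ := Finset.univ.sup (fun n => (k n).toNat) with hZ
    have hBZ : ∀ u ∈ B, u 2 < N + Z := by
      rintro u ⟨n, hn⟩
      have h1 := coord_le_ldot (hpos n) u 2
      have h2 : (k n).toNat ≤ Z := by
        rw [hZ]
        exact Finset.le_sup (f := fun n => (k n).toNat) (Finset.mem_univ n)
      omega
    obtain ⟨h₀, hh₀⟩ := Ideal.Quotient.mk_surjective g
    obtain ⟨h, hh, hinv⟩ := step1 f₀ N hN1 hsuppf hcoeffN g B hBfin Z h₀ hh₀
      (fun u _ hu => hBZ u hu)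
    refine ⟨h, hh, ?_⟩
    intro n
    obtain ⟨hn, hhn, hngood⟩ := hyp n
    refine step2 f₀ N hN1 (ll n) (hpos n) (k n) hsuppf hcoeffN (hfc n) h hn ?_ ?_ hngood
    · rw [hh, hhn]
    · intro u hu hlow
      exact hinv u hu ⟨n, hlow⟩
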